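/- arXiv:1005.2335 — 2 statements merged into one kernel-verified Lean document; each statement's English description precedes it below -/
import Mathlib

section
/- For positive reals β_1,…,β_N, γ_0,…,γ_N and Z = γ_0 + Σ_{i=1}^N β_i γ_i, the N×N matrix Q with entries Q_{ij} = (γ_i/(β_i Z)) δ_{ij} − γ_i γ_j / Z² is positive definite. -/
theorem Q_matrix_posDef (N : ℕ) (hN : 1 ≤ N) (β γ : Fin N → ℝ) (γ₀ : ℝ)
    (hβ : ∀ i, 0 < β i) (hγ : ∀ i, 0 < γ i) (hγ₀ : 0 < γ₀)
    (Z : ℝ) (hZ : Z = γ₀ + ∑ i, β i * γ i)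
    (Q : Matrix (Fin N) (Fin N) ℝ)
    (hQ : ∀ i j, Q i j = (if i = j then γ i / (β i * Z) else 0) - γ i * γ j / Z ^ 2) :
    Q.PosDef := by
  have hsum : 0 ≤ ∑ i, β i * γ i :=
    Finset.sum_nonneg fun i _ => le_of_lt (mul_pos (hβ i) (hγ i))
  have hZpos : 0 < Z := by rw [hZ]; linarith
  refine Matrix.PosDef.of_dotProduct_mulVec_pos ?_ ?_
  · ext i j
    simp only [Matrix.conjTranspose_apply, hQ, star_trivial]
    rcases eq_or_ne i j with h | h
    · subst h; ring
    · simp [h, Ne.symm h]; ring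
  · intro x hx
    set S := ∑ i, γ i * x i with hS
    set T := ∑ i, γ i * x i ^ 2 / β i with hT
    have expand : dotProduct (star x) (Q.mulVec x) = T / Z - S ^ 2 / Z ^ 2 := by
      have inner : ∀ i, Q.mulVec x i = γ i * x i / (β i * Z) - γ i * S / Z ^ 2 := by
        intro i
        simp only [Matrix.mulVec, dotProduct, hQ, sub_mul, Finset.sum_sub_distrib,
          ite_mul, zero_mul, Finset.sum_ite_eq, Finset.mem_univ, if_true]
        rw [hS, Finset.mul_sum, Finset.sum_div]
        congr 1
        · ring
        · exact Finset.sum_congr rfl fun j _ => by ring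
      simp only [dotProduct, Pi.star_apply, star_trivial, inner, mul_sub]
      rw [Finset.sum_sub_distrib]
      congr 1
      · rw [hT, Finset.sum_div]
        exact Finset.sum_congr rfl fun i _ => by ring
      · have e : ∀ i, x i * (γ i * S / Z ^ 2) = γ i * x i * (S / Z ^ 2) := fun i => by ring
        simp only [e]
        rw [← Finset.sum_mul, ← hS]
        ring
    rw [expand]
    have hTpos : 0 < T := by
      obtain ⟨i, hi⟩ := Function.ne_iff.mp hx
      refine Finset.sum_pos' (fun j _ =>
        div_nonneg (mul_nonneg (hγ j).le (sq_nonneg _)) (hβ j).le)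
        ⟨i, Finset.mem_univ i, div_pos (mul_pos (hγ i)
          (pow_two_pos_of_ne_zero hi)) (hβ i)⟩
    have cauchy : S ^ 2 ≤ (∑ i, β i * γ i) * T := by
      have h := Finset.sum_mul_sq_le_sq_mul_sq Finset.univ
        (fun i => Real.sqrt (β i * γ i)) (fun i => Real.sqrt (γ i / β i) * x i)
      have e1 : ∀ i, Real.sqrt (β i * γ i) * (Real.sqrt (γ i / β i) * x i) = γ i * x i := by
        intro i
        rw [← mul_assoc, ← Real.sqrt_mul (mul_pos (hβ i) (hγ i)).le]
        have hb := (hβ i).ne'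
        have : β i * γ i * (γ i / β i) = γ i ^ 2 := by field_simp
        rw [this, Real.sqrt_sq (hγ i).le]
      have e2 : ∀ i, Real.sqrt (β i * γ i) ^ 2 = β i * γ i := fun i =>
        Real.sq_sqrt (mul_pos (hβ i) (hγ i)).le
      have e3 : ∀ i, (Real.sqrt (γ i / β i) * x i) ^ 2 = γ i * x i ^ 2 / β i := by
        intro i
        rw [mul_pow, Real.sq_sqrt (div_pos (hγ i) (hβ i)).le]
        ring
      simp only [e1, e2, e3] at h
      exact h
    have hlt : S ^ 2 / Z ^ 2 < T / Z := by
      rw [div_lt_div_iff₀ (pow_pos hZpos 2) hZpos]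
      nlinarith [mul_pos hγ₀ hTpos, mul_pos hZpos hTpos]
    linarith
end

section
/- For positive reals β_1,…,β_N, γ_0,…,γ_N, Z = γ_0 + Σ_{i=1}^N β_i γ_i, and 1 ≤ k ≤ N, the determinant of the k×k leading principal submatrix of the matrix Q with entries Q_{ij} = (γ_i/(β_i Z)) δ_{ij} − γ_i γ_j / Z² equals (γ_0 + Σ_{i=k+1}^N β_i γ_i) · Z^{−(k+1)} · ∏_{i=1}^k (γ_i / β_i). -/
theorem Q_leading_principal_minor (N : ℕ) (hN : 1 ≤ N) (β γ : Fin N → ℝ) (γ₀ : ℝ)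
    (hβ : ∀ i, 0 < β i) (hγ : ∀ i, 0 < γ i) (hγ₀ : 0 < γ₀)
    (Z : ℝ) (hZ : Z = γ₀ + ∑ i, β i * γ i)
    (Q : Matrix (Fin N) (Fin N) ℝ)
    (hQ : ∀ i j, Q i j = (if i = j then γ i / (β i * Z) else 0) - γ i * γ j / Z ^ 2)
    (k : ℕ) (hk1 : 1 ≤ k) (hkN : k ≤ N) :
    (Q.submatrix (Fin.castLE hkN) (Fin.castLE hkN)).det
      = (γ₀ + ∑ i ∈ Finset.univ.filter (fun i : Fin N => k ≤ i.val), β i * γ i)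
        / Z ^ (k + 1) * ∏ i : Fin k, γ (Fin.castLE hkN i) / β (Fin.castLE hkN i) := by
  have hZpos : 0 < Z := by
    rw [hZ]
    have : 0 ≤ ∑ i, β i * γ i := Finset.sum_nonneg fun i _ => le_of_lt (mul_pos (hβ i) (hγ i))
    linarith
  have hZne : Z ≠ 0 := ne_of_gt hZpos
  set β' : Fin k → ℝ := fun i => β (Fin.castLE hkN i) with hβ'
  set γ' : Fin k → ℝ := fun i => γ (Fin.castLE hkN i) with hγ'
  have hβ'pos : ∀ i, 0 < β' i := fun i => hβ _
  have hγ'pos : ∀ i, 0 < γ' i := fun i => hγ _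
  have hfact : Q.submatrix (Fin.castLE hkN) (Fin.castLE hkN)
      = Matrix.diagonal (fun i => γ' i / (β' i * Z)) *
        (1 + Matrix.replicateCol (Fin 1) (fun i => -(β' i) / Z) * Matrix.replicateRow (Fin 1) γ') := by
    ext i j
    simp only [Matrix.submatrix_apply, hQ, Matrix.mul_apply, Matrix.add_apply,
      Matrix.one_apply, Matrix.diagonal_apply, Matrix.replicateCol_apply, Matrix.replicateRow_apply,
      Finset.univ_unique, Finset.sum_const, Finset.card_singleton, one_smul]
    rw [Finset.sum_eq_single i]
    · by_cases h : i = j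
      · subst h
        rw [if_pos rfl, if_pos rfl]
        have hb := ne_of_gt (hβ'pos i)
        simp only [hβ', hγ', if_true] at hb ⊢
        field_simp
        ring
      · have h' : ¬ (Fin.castLE hkN i = Fin.castLE hkN j) := by
          simpa [Fin.castLE_inj] using h
        rw [if_neg h', if_neg h]
        have hb := ne_of_gt (hβ'pos i)
        simp only [hβ', hγ', if_true] at hb ⊢
        field_simp
        ring
    · intro b _ hb
      rw [if_neg (Ne.symm hb), zero_mul]
    · intro h; exact absurd (Finset.mem_univ i) h
  rw [hfact, Matrix.det_mul, Matrix.det_diagonal]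
  erw [Matrix.det_one_add_replicateCol_mul_replicateRow (ι := Fin 1)]
  have hdot : dotProduct γ' (fun i => -(β' i) / Z) = -(∑ i, β' i * γ' i) / Z := by
    simp only [dotProduct]
    rw [neg_div, Finset.sum_div, ← Finset.sum_neg_distrib]
    exact Finset.sum_congr rfl fun i _ => by ring
  rw [hdot]
  -- split the total sum
  have h1 : ∑ i ∈ Finset.univ.filter (fun i : Fin N => i.val < k), β i * γ i
      = ∑ i : Fin k, β' i * γ' i := by
    refine Finset.sum_bij' (fun a ha => (⟨a.val, (Finset.mem_filter.mp ha).2⟩ : Fin k))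
      (fun b _ => Fin.castLE hkN b) ?_ ?_ ?_ ?_ ?_
    · intro a ha; exact Finset.mem_univ _
    · intro b hb
      exact Finset.mem_filter.mpr ⟨Finset.mem_univ _, b.isLt⟩
    · intro a ha; rfl
    · intro b hb; rfl
    · intro a ha; rfl
  have hsplit : (∑ i, β i * γ i)
      = (∑ i ∈ Finset.univ.filter (fun i : Fin N => k ≤ i.val), β i * γ i)
        + ∑ i, β' i * γ' i := by
    rw [← h1, ← Finset.sum_filter_add_sum_filter_not Finset.univ (fun i : Fin N => k ≤ i.val)]
    congr 1
    apply Finset.sum_congr _ (fun _ _ => rfl)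
    congr 1
    ext i
    simp [not_le]
  have hprod : ∏ i, γ' i / (β' i * Z) = (∏ i, γ' i / β' i) / Z ^ k := by
    rw [Finset.prod_div_distrib]
    · rw [Finset.prod_div_distrib, Finset.prod_mul_distrib, Finset.prod_const,
        Finset.card_univ, Fintype.card_fin, div_div]
  rw [hprod]
  have hS : γ₀ + ∑ i ∈ Finset.univ.filter (fun i : Fin N => k ≤ i.val), β i * γ i
      = Z - ∑ i, β' i * γ' i := by
    rw [hZ, hsplit]; ring
  rw [hS]
  field_simp
  ring
end
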